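/- Discrete Euler–Lagrange equation: Let L : ℤ × ℝ × ℝ → ℝ be C¹ in its last two arguments. If q : ℤ → ℝ minimizes I[q] = ∑_{t=a}^{b−1} L(t, q(t+1), q(t+1) − q(t)) over all sequences with fixed endpoints q(a) = q_a, q(b) = q_b, then for all t with a ≤ t ≤ b−2: ∂₃L(t+1, q(t+2), Δq(t+1)) − ∂₃L(t, q(t+1), Δq(t)) = ∂₂L(t, q(t+1), Δq(t)), where Δq(t) = q(t+1) − q(t). -/

import Mathlib

/-- Discrete Euler–Lagrange equation on 𝕋 = ℤ: a minimizer of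
`I[q] = ∑_{t=a}^{b-1} L(t, q(t+1), q(t+1)-q(t))` with fixed endpoints satisfies
`∂₃L(t+1, q(t+2), Δq(t+1)) - ∂₃L(t, q(t+1), Δq(t)) = ∂₂L(t, q(t+1), Δq(t))`
for `a ≤ t ≤ b - 2`. -/
theorem discrete_euler_lagrange (a b : ℤ) (qa qb : ℝ)
    (L : ℤ → ℝ → ℝ → ℝ)
    (hL : ∀ t : ℤ, ContDiff ℝ 1 (fun p : ℝ × ℝ => L t p.1 p.2))
    (q : ℤ → ℝ) (hqa : q a = qa) (hqb : q b = qb)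
    (hmin : ∀ r : ℤ → ℝ, r a = qa → r b = qb →
      ∑ t ∈ Finset.Ico a b, L t (q (t + 1)) (q (t + 1) - q t) ≤
        ∑ t ∈ Finset.Ico a b, L t (r (t + 1)) (r (t + 1) - r t)) :
    ∀ t : ℤ, a ≤ t → t ≤ b - 2 →
      deriv (fun v => L (t + 1) (q (t + 2)) v) (q (t + 2) - q (t + 1)) -
          deriv (fun v => L t (q (t + 1)) v) (q (t + 1) - q t) =
        deriv (fun u => L t u (q (t + 1) - q t)) (q (t + 1)) := by
  intro t hta htb
  set c1 : ℝ := q (t + 1) with hc1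
  set c2 : ℝ := q (t + 1) - q t with hc2
  set c3 : ℝ := q (t + 2) with hc3
  set c4 : ℝ := q (t + 2) - q (t + 1) with hc4
  have hF : ∀ s : ℤ, Differentiable ℝ (fun p : ℝ × ℝ => L s p.1 p.2) :=
    fun s => (hL s).differentiable one_ne_zero
  set D : ℝ × ℝ →L[ℝ] ℝ := fderiv ℝ (fun p : ℝ × ℝ => L t p.1 p.2) (c1, c2) with hDdef
  set E : ℝ × ℝ →L[ℝ] ℝ :=
    fderiv ℝ (fun p : ℝ × ℝ => L (t + 1) p.1 p.2) (c3, c4) with hEdef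
  have hD : HasFDerivAt (fun p : ℝ × ℝ => L t p.1 p.2) D (c1, c2) :=
    ((hF t) (c1, c2)).hasFDerivAt
  have hE : HasFDerivAt (fun p : ℝ × ℝ => L (t + 1) p.1 p.2) E (c3, c4) :=
    ((hF (t + 1)) (c3, c4)).hasFDerivAt
  -- partial derivatives
  have h21 : HasDerivAt (fun u => L t u c2) (D (1, 0)) c1 := by
    have hcurve : HasDerivAt (fun u : ℝ => (u, c2)) ((1 : ℝ), (0 : ℝ)) c1 :=
      (hasDerivAt_id c1).prodMk (hasDerivAt_const c1 c2)
    exact hD.comp_hasDerivAt c1 hcurve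
  have h22 : HasDerivAt (fun v => L t c1 v) (D (0, 1)) c2 := by
    have hcurve : HasDerivAt (fun v : ℝ => (c1, v)) ((0 : ℝ), (1 : ℝ)) c2 :=
      (hasDerivAt_const c2 c1).prodMk (hasDerivAt_id c2)
    exact hD.comp_hasDerivAt c2 hcurve
  have h32 : HasDerivAt (fun v => L (t + 1) c3 v) (E (0, 1)) c4 := by
    have hcurve : HasDerivAt (fun v : ℝ => (c3, v)) ((0 : ℝ), (1 : ℝ)) c4 :=
      (hasDerivAt_const c4 c3).prodMk (hasDerivAt_id c4)
    exact hE.comp_hasDerivAt c4 hcurve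
  -- the one-parameter variation
  set f : ℝ → ℝ := fun ε => L t (c1 + ε) (c2 + ε) + L (t + 1) c3 (c4 - ε) with hfdef
  have hf : HasDerivAt f (D (1, 1) - E (0, 1)) 0 := by
    have hc1' : HasDerivAt (fun ε : ℝ => (c1 + ε, c2 + ε)) ((1 : ℝ), (1 : ℝ)) 0 :=
      ((hasDerivAt_id (0 : ℝ)).const_add c1).prodMk ((hasDerivAt_id (0 : ℝ)).const_add c2)
    have hD' : HasFDerivAt (fun p : ℝ × ℝ => L t p.1 p.2) D (c1 + 0, c2 + 0) := by
      simpa using hD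
    have h1 : HasDerivAt (fun ε : ℝ => L t (c1 + ε) (c2 + ε)) (D (1, 1)) 0 :=
      hD'.comp_hasDerivAt (f := fun ε : ℝ => (c1 + ε, c2 + ε)) 0 hc1'
    have hc2' : HasDerivAt (fun ε : ℝ => (c3, c4 - ε)) ((0 : ℝ), (-1 : ℝ)) 0 :=
      (hasDerivAt_const (0 : ℝ) c3).prodMk ((hasDerivAt_id (0 : ℝ)).const_sub c4)
    have hE' : HasFDerivAt (fun p : ℝ × ℝ => L (t + 1) p.1 p.2) E (c3, c4 - 0) := by
      simpa using hE
    have h2 : HasDerivAt (fun ε : ℝ => L (t + 1) c3 (c4 - ε)) (E (0, -1)) 0 :=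
      hE'.comp_hasDerivAt (f := fun ε : ℝ => (c3, c4 - ε)) 0 hc2'
    have hEneg : E (0, -1) = -E (0, 1) := by
      have : ((0 : ℝ), (-1 : ℝ)) = -((0 : ℝ), (1 : ℝ)) := by simp [Prod.ext_iff]
      rw [this, map_neg]
    rw [hEneg] at h2
    exact (h1.add h2).congr_deriv (by ring)
  -- f has a global (hence local) minimum at 0
  have hle : ∀ ε : ℝ, f 0 ≤ f ε := by
    intro ε
    set r : ℤ → ℝ := fun s => if s = t + 1 then q s + ε else q s with hrdef
    have hra : r a = qa := by
      have : a ≠ t + 1 := by omega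
      simp [hrdef, this, hqa]
    have hrb : r b = qb := by
      have : b ≠ t + 1 := by omega
      simp [hrdef, this, hqb]
    have hkey := hmin r hra hrb
    set Tq : ℤ → ℝ := fun s => L s (q (s + 1)) (q (s + 1) - q s) with hTq
    set Tr : ℤ → ℝ := fun s => L s (r (s + 1)) (r (s + 1) - r s) with hTr
    have hsub : ({t, t + 1} : Finset ℤ) ⊆ Finset.Ico a b := by
      intro x hx
      simp only [Finset.mem_insert, Finset.mem_singleton] at hx
      simp only [Finset.mem_Ico]
      omega
    have hzero : ∀ x ∈ Finset.Ico a b, x ∉ ({t, t + 1} : Finset ℤ) →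
        Tr x - Tq x = 0 := by
      intro x _ hx
      simp only [Finset.mem_insert, Finset.mem_singleton, not_or] at hx
      have h1 : x + 1 ≠ t + 1 := by omega
      have h2 : x ≠ t + 1 := by omega
      simp [hTr, hTq, hrdef, h1, h2, hx.1]
    have hsum : ∑ x ∈ ({t, t + 1} : Finset ℤ), (Tr x - Tq x) =
        ∑ x ∈ Finset.Ico a b, (Tr x - Tq x) :=
      Finset.sum_subset hsub hzero
    have hpair : ∑ x ∈ ({t, t + 1} : Finset ℤ), (Tr x - Tq x) =
        (Tr t - Tq t) + (Tr (t + 1) - Tq (t + 1)) :=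
      Finset.sum_pair (by omega)
    have hTrt : Tr t = L t (c1 + ε) (c2 + ε) := by
      have h1 : r (t + 1) = q (t + 1) + ε := by simp [hrdef]
      have h2 : r t = q t := by
        have : t ≠ t + 1 := by omega
        simp [hrdef, this]
      simp only [hTr, h1, h2, hc1, hc2]
      ring_nf
    have hTrt1 : Tr (t + 1) = L (t + 1) c3 (c4 - ε) := by
      have he : (t + 1) + 1 = t + 2 := by ring
      have h1 : r (t + 2) = q (t + 2) := by
        have : t + 2 ≠ t + 1 := by omega
        simp [hrdef, this]
      have h2 : r (t + 1) = q (t + 1) + ε := by simp [hrdef]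
      simp only [hTr, he, h1, h2, hc3, hc4]
      ring_nf
    have hTqt : Tq t = L t c1 c2 := rfl
    have hTqt1 : Tq (t + 1) = L (t + 1) c3 c4 := by
      have he : (t + 1) + 1 = t + 2 := by ring
      simp only [hTq, he, hc3, hc4]
    have hdiff : ∑ x ∈ Finset.Ico a b, Tr x - ∑ x ∈ Finset.Ico a b, Tq x =
        f ε - f 0 := by
      rw [← Finset.sum_sub_distrib, ← hsum, hpair, hTrt, hTrt1, hTqt, hTqt1]
      simp [hfdef]
      ring
    have : (0 : ℝ) ≤ f ε - f 0 := by
      rw [← hdiff]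
      exact sub_nonneg.mpr hkey
    linarith
  have hlocal : IsLocalMin f 0 := Filter.Eventually.of_forall hle
  have hderiv0 : D (1, 1) - E (0, 1) = 0 := hlocal.hasDerivAt_eq_zero hf
  have hsplit : D (1, 1) = D (1, 0) + D (0, 1) := by
    have : ((1 : ℝ), (1 : ℝ)) = ((1 : ℝ), (0 : ℝ)) + ((0 : ℝ), (1 : ℝ)) := by
      simp [Prod.ext_iff]
    rw [this, map_add]
  rw [h32.deriv, h22.deriv, h21.deriv]
  linarith [hderiv0, hsplit]
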